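/- Let G be a finite simple graph without isolated vertices. If G has a minimum dominating set D that is an independent set, then γ⁻¹(G) ≤ α(G). -/

import Mathlib

/-- `D` is a dominating set of `G`: every vertex lies in `D` or has a neighbor in `D`. -/
def IsDomSet {V : Type*} (G : SimpleGraph V) (D : Set V) : Prop :=
  ∀ v : V, v ∈ D ∨ ∃ u ∈ D, G.Adj u v

/-- `S` is an independent set of `G`. -/
def IsIndep {V : Type*} (G : SimpleGraph V) (S : Set V) : Prop :=
  S.Pairwise fun u v => ¬ G.Adj u v

/-- The domination number of `G`: the minimum size of a dominating set. -/
noncomputable def gamma {V : Type*} (G : SimpleGraph V) : ℕ :=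
  sInf {n | ∃ D : Set V, IsDomSet G D ∧ D.ncard = n}

/-- The independence number of `G`: the maximum size of an independent set. -/
noncomputable def alpha {V : Type*} (G : SimpleGraph V) : ℕ :=
  sSup {n | ∃ S : Set V, IsIndep G S ∧ S.ncard = n}

/-- The inverse domination number of `G`: the minimum size of a dominating set
disjoint from some minimum dominating set. -/
noncomputable def invGamma {V : Type*} (G : SimpleGraph V) : ℕ :=
  sInf {n | ∃ D T : Set V, IsDomSet G D ∧ D.ncard = gamma G ∧
    IsDomSet G T ∧ D ∩ T = ∅ ∧ T.ncard = n}

/-- The independence number of the subgraph of `G` induced by `D`. -/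
noncomputable def alphaOn {V : Type*} (G : SimpleGraph V) (D : Set V) : ℕ :=
  sSup {n | ∃ S : Set V, S ⊆ D ∧ IsIndep G S ∧ S.ncard = n}

/-- The number of edges of the subgraph of `G` induced by `D`. -/
noncomputable def edgeCountOn {V : Type*} (G : SimpleGraph V) (D : Set V) : ℕ :=
  {e ∈ G.edgeSet | ∀ v ∈ e, v ∈ D}.ncard

/-- `D` is an optimal dominating set: of minimum size; among those, `G[D]` has
maximum independence number; and subject to that, `G[D]` has fewest edges. -/
def IsOptimalDomSet {V : Type*} (G : SimpleGraph V) (D : Set V) : Prop :=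
  IsDomSet G D ∧ D.ncard = gamma G ∧
  (∀ D' : Set V, IsDomSet G D' → D'.ncard = gamma G → alphaOn G D' ≤ alphaOn G D) ∧
  (∀ D' : Set V, IsDomSet G D' → D'.ncard = gamma G →
    alphaOn G D' = alphaOn G D → edgeCountOn G D ≤ edgeCountOn G D')

/-- `w` is a private neighbor of `v` with respect to `D`: `w ∉ D` and `N(w) ∩ D = {v}`. -/
def IsPrivateNbr {V : Type*} (G : SimpleGraph V) (D : Set V) (v w : V) : Prop :=
  w ∉ D ∧ G.Adj v w ∧ ∀ u ∈ D, G.Adj u w → u = v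

/-- `R` is a partial independent set of representatives (partial ISR) for the family `P`:
an independent set consisting of distinct representatives of some subfamily of `P`. -/
def IsPartialISR {V : Type*} (G : SimpleGraph V) {n : ℕ} (P : Fin n → Set V)
    (R : Set V) : Prop :=
  IsIndep G R ∧ ∃ (J : Set (Fin n)) (x : Fin n → V),
    Set.InjOn x J ∧ (∀ j ∈ J, x j ∈ P j) ∧ R = x '' J

/-- `b(G)`: the largest number of vertices of an induced bipartite subgraph of `G`. -/
noncomputable def bipNum {V : Type*} (G : SimpleGraph V) : ℕ :=
  sSup {n | ∃ B A : Set V, A ⊆ B ∧ IsIndep G A ∧ IsIndep G (B \ A) ∧ B.ncard = n}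

theorem inverse_domination_of_indep_min_dom {V : Type*} [Fintype V] (G : SimpleGraph V)
    (hiso : ∀ v : V, ∃ u, G.Adj v u)
    (D : Set V) (hDdom : IsDomSet G D) (hDmin : D.ncard = gamma G)
    (hDind : IsIndep G D) :
    invGamma G ≤ alpha G := by
  classical
  have hsymm : Symmetric (fun u v : V => ¬ G.Adj u v) := by
    intro a b h hab; exact h hab.symm
  -- a maximum-cardinality independent subset of Dᶜ
  obtain ⟨M, hM𝒮, hMmax⟩ := Set.Finite.exists_maximalFor Set.ncard
    {S : Set V | S ⊆ Dᶜ ∧ IsIndep G S} (Set.toFinite _)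
    ⟨∅, by simp [IsIndep]⟩
  obtain ⟨hMsub, hMind⟩ := hM𝒮
  -- maximality: every vertex outside D not in M has a neighbor in M
  have hkey : ∀ v : V, v ∉ D → v ∉ M → ∃ m ∈ M, G.Adj m v := by
    intro v hvD hvM
    by_contra hcon
    push_neg at hcon
    have hins : insert v M ∈ {S : Set V | S ⊆ Dᶜ ∧ IsIndep G S} := by
      constructor
      · intro x hx
        rcases hx with rfl | hx
        · exact hvD
        · exact hMsub hx
      · rw [IsIndep, @Set.pairwise_insert_of_symm (r := fun u v : V => ¬ G.Adj u v) (s := M) (a := v) _ ⟨fun a b h => hsymm h⟩]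
        refine ⟨hMind, fun b hb _ hadj => hcon b hb hadj.symm⟩
    have h1 : M.ncard ≤ (insert v M).ncard := by
      rw [Set.ncard_insert_of_notMem hvM (Set.toFinite M)]; omega
    have h2 := hMmax hins h1
    rw [Set.ncard_insert_of_notMem hvM (Set.toFinite M)] at h2
    omega
  -- U : D-vertices not dominated by M
  set U : Set V := {v ∈ D | ∀ m ∈ M, ¬ G.Adj m v} with hU
  -- for each vertex, a neighbor
  have hg : ∀ v : V, G.Adj v (hiso v).choose := fun v => (hiso v).choose_spec
  set g : V → V := fun v => (hiso v).choose with hgdef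
  have hgD : ∀ v ∈ D, g v ∉ D := by
    intro v hv hgvD
    exact hDind hv hgvD ((hg v).ne) (hg v)
  set T : Set V := M ∪ g '' U with hT
  -- M ∪ U is independent
  have hMUind : IsIndep G (M ∪ U) := by
    rw [IsIndep, @Set.pairwise_union_of_symm (r := fun u v : V => ¬ G.Adj u v) (s := M) (t := U) _ ⟨fun a b h => hsymm h⟩]
    refine ⟨hMind, hDind.mono (fun x hx => hx.1), ?_⟩
    intro a ha b hb _ hadj
    exact hb.2 a ha hadj
  -- disjointness of M and U
  have hMU : Disjoint M U := by
    rw [Set.disjoint_left]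
    intro a haM haU
    exact (hMsub haM) haU.1
  -- cardinality bound on T
  have hTcard : T.ncard ≤ alpha G := by
    have h1 : T.ncard ≤ M.ncard + U.ncard := by
      calc T.ncard ≤ M.ncard + (g '' U).ncard :=
            Set.ncard_union_le _ _
        _ ≤ M.ncard + U.ncard := by
            have := Set.ncard_image_le (f := g) (s := U) (Set.toFinite U)
            omega
    have h2 : (M ∪ U).ncard = M.ncard + U.ncard :=
      Set.ncard_union_eq hMU (Set.toFinite M) (Set.toFinite U)
    have h3 : (M ∪ U).ncard ≤ alpha G := by
      apply le_csSup
      · refine ⟨Fintype.card V, ?_⟩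
        rintro n ⟨S, _, rfl⟩
        have h := Set.ncard_le_ncard (Set.subset_univ S) (Set.toFinite _)
        rwa [Set.ncard_univ, Nat.card_eq_fintype_card] at h
      · exact ⟨M ∪ U, hMUind, rfl⟩
    omega
  -- T is dominating
  have hTdom : IsDomSet G T := by
    intro v
    by_cases hvD : v ∈ D
    · by_cases hvU : v ∈ U
      · exact Or.inr ⟨g v, Or.inr ⟨v, hvU, rfl⟩, (hg v).symm⟩
      · right
        have : ¬ (∀ m ∈ M, ¬ G.Adj m v) := fun h => hvU ⟨hvD, h⟩
        push_neg at this
        obtain ⟨m, hm, hadj⟩ := this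
        exact ⟨m, Or.inl hm, hadj⟩
    · by_cases hvM : v ∈ M
      · exact Or.inl (Or.inl hvM)
      · obtain ⟨m, hm, hadj⟩ := hkey v hvD hvM
        exact Or.inr ⟨m, Or.inl hm, hadj⟩
  -- D and T are disjoint
  have hDT : D ∩ T = ∅ := by
    ext x
    simp only [Set.mem_inter_iff, Set.mem_empty_iff_false, iff_false, not_and]
    intro hxD hxT
    rcases hxT with hxM | ⟨u, huU, rfl⟩
    · exact (hMsub hxM) hxD
    · exact hgD u huU.1 hxD
  -- conclude
  have : invGamma G ≤ T.ncard :=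
    Nat.sInf_le ⟨D, T, hDdom, hDmin, hTdom, hDT, rfl⟩
  omega
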